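/- W⁰_max = {w ∈ W⁰ : w⁻¹(α) ∈ Δ(≤1) for all α ∈ Π}, where W⁰_max = {w_{I,max} : I a lower ideal of Δ(1)} and Δ(≤1) = ⊔_{j≤1} Δ(j). -/

import Mathlib

open RealInnerProductSpace

variable {V : Type*} [NormedAddCommGroup V] [InnerProductSpace ℝ V] [FiniteDimensional ℝ V]

/-- The orthogonal reflection in the hyperplane orthogonal to `α`. -/
noncomputable def sref (α : V) : V ≃ₗ[ℝ] V :=
  (Submodule.reflection ((ℝ ∙ α)ᗮ)).toLinearEquiv

/-- `Δ` is an (irreducible, crystallographic, reduced) root system, equipped with a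
`ℤ`-grading `d` (so that `Δ(i) = {γ ∈ Δ | d γ = i}`) and a compatible set `Pos = Δ⁺`
of positive roots (compatibility: every root of level `≥ 1` is positive). -/
structure GradedRootSystem (Δ : Set V) (d : V → ℤ) (Pos : Set V) : Prop where
  finite : Δ.Finite
  span_top : Submodule.span ℝ Δ = ⊤
  nonzero : ∀ α ∈ Δ, α ≠ 0
  neg_mem : ∀ α ∈ Δ, -α ∈ Δ
  reduced : ∀ α ∈ Δ, ∀ c : ℝ, c • α ∈ Δ → c = 1 ∨ c = -1
  reflect_mem : ∀ α ∈ Δ, ∀ β ∈ Δ, β - (2 * ⟪β, α⟫ / ⟪α, α⟫) • α ∈ Δ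
  crystallographic : ∀ α ∈ Δ, ∀ β ∈ Δ, ∃ n : ℤ, (n : ℝ) = 2 * ⟪β, α⟫ / ⟪α, α⟫
  irreducible : ∀ Δ₁ Δ₂ : Set V, Δ = Δ₁ ∪ Δ₂ → (∀ a ∈ Δ₁, ∀ b ∈ Δ₂, ⟪a, b⟫ = 0) →
    Δ₁ = ∅ ∨ Δ₂ = ∅
  grade_add : ∀ γ₁ ∈ Δ, ∀ γ₂ ∈ Δ, γ₁ + γ₂ ∈ Δ → d (γ₁ + γ₂) = d γ₁ + d γ₂
  grade_neg : ∀ γ ∈ Δ, d (-γ) = - d γ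
  pos_subset : Pos ⊆ Δ
  pos_iff : ∀ γ ∈ Δ, (γ ∈ Pos ↔ -γ ∉ Pos)
  pos_add : ∀ γ₁ ∈ Pos, ∀ γ₂ ∈ Pos, γ₁ + γ₂ ∈ Δ → γ₁ + γ₂ ∈ Pos
  compatible : ∀ γ ∈ Δ, 1 ≤ d γ → γ ∈ Pos

/-- The level set `Δ(i)` of the grading. -/
def level (Δ : Set V) (d : V → ℤ) (i : ℤ) : Set V := {γ ∈ Δ | d γ = i}

/-- `Δ(≥ k)`. -/
def levelGE (Δ : Set V) (d : V → ℤ) (k : ℤ) : Set V := {γ ∈ Δ | k ≤ d γ}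

/-- `Δ(≤ k)`. -/
def levelLE (Δ : Set V) (d : V → ℤ) (k : ℤ) : Set V := {γ ∈ Δ | d γ ≤ k}

/-- `Δ(0)⁺`, the positive part of `Δ(0)`. -/
def pos0 (d : V → ℤ) (Pos : Set V) : Set V := {γ ∈ Pos | d γ = 0}

/-- The simple roots of a positive system `P`: positive roots that are not the sum
of two positive roots. -/
def simpleRoots (P : Set V) : Set V := {γ ∈ P | ¬ ∃ a ∈ P, ∃ b ∈ P, γ = a + b}

/-- `idealPow Δ I k = I^k`, with `I¹ = I` and `I^{k+1} = (I + I^k) ∩ Δ`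
(and `I⁰ = ∅` by convention). -/
def idealPow (Δ I : Set V) : ℕ → Set V
  | 0 => ∅
  | 1 => I
  | (k+2) => {x ∈ Δ | ∃ a ∈ I, ∃ b ∈ idealPow Δ I (k+1), x = a + b}

/-- `⟨I⟩ = ⋃_{k ≥ 1} I^k`. -/
def gen (Δ I : Set V) : Set V := ⋃ k : ℕ, idealPow Δ I (k+1)

/-- A subset `M` of roots is closed if it is closed under root addition. -/
def IsClosedSubset (Δ M : Set V) : Prop :=
  ∀ γ₁ ∈ M, ∀ γ₂ ∈ M, γ₁ + γ₂ ∈ Δ → γ₁ + γ₂ ∈ M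

/-- Bi-convexity of `M ⊆ Δ⁺`: both `M` and `Δ⁺ \ M` are closed. -/
def IsBiConvex (Δ Pos M : Set V) : Prop :=
  IsClosedSubset Δ M ∧ IsClosedSubset Δ (Pos \ M)

/-- The partial order on each level `Δ(i)`: `γ' ≼ γ` iff `γ - γ'` is a nonnegative
integral combination of the simple roots `Π(0)` of `Δ(0)⁺`. -/
def leLevel (d : V → ℤ) (Pos : Set V) (γ' γ : V) : Prop :=
  γ - γ' ∈ AddSubmonoid.closure (simpleRoots (pos0 d Pos))

/-- A lower ideal of the weight poset `Δ(i)`. -/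
def IsLowerIdeal (Δ : Set V) (d : V → ℤ) (Pos : Set V) (i : ℤ) (I : Set V) : Prop :=
  I ⊆ level Δ d i ∧ ∀ γ ∈ I, ∀ ν ∈ level Δ d i, leLevel d Pos ν γ → ν ∈ I

/-- An upper ideal of the weight poset `Δ(i)`. -/
def IsUpperIdeal (Δ : Set V) (d : V → ℤ) (Pos : Set V) (i : ℤ) (I : Set V) : Prop :=
  I ⊆ level Δ d i ∧ ∀ γ ∈ I, ∀ ν ∈ level Δ d i, leLevel d Pos γ ν → ν ∈ I

/-- The Weyl group of the set of roots `S`: the subgroup of `GL(V)` generated by the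
reflections `s_α`, `α ∈ S`. -/
noncomputable def weyl (S : Set V) : Subgroup (V ≃ₗ[ℝ] V) :=
  Subgroup.closure {g | ∃ α ∈ S, g = sref α}

/-- The inversion set `N(w) = {γ ∈ Δ⁺ | -w(γ) ∈ Δ⁺}`. -/
def invSet (Pos : Set V) (w : V ≃ₗ[ℝ] V) : Set V := {γ ∈ Pos | -(w γ) ∈ Pos}

/-- `W⁰`, the minimal length coset representatives of `W/W(0)`:
elements of `W` sending `Δ(0)⁺` into `Δ⁺`. -/
noncomputable def W0 (Δ : Set V) (d : V → ℤ) (Pos : Set V) : Set (V ≃ₗ[ℝ] V) :=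
  {w | w ∈ weyl Δ ∧ ∀ γ ∈ pos0 d Pos, w γ ∈ Pos}

/-- `W⁰_min`: the set of elements `w ∈ W⁰` that are of minimal length in the fiber
`τ⁻¹(N(w) ∩ Δ(1))`, i.e. the minimal elements `w_{I,min}` of all lower ideals `I`. -/
noncomputable def Wmin (Δ : Set V) (d : V → ℤ) (Pos : Set V) : Set (V ≃ₗ[ℝ] V) :=
  {w ∈ W0 Δ d Pos | ∀ w' ∈ W0 Δ d Pos,
    invSet Pos w' ∩ level Δ d 1 = invSet Pos w ∩ level Δ d 1 →
    invSet Pos w ⊆ invSet Pos w'}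

/-- `W⁰_max`: the set of elements `w ∈ W⁰` that are of maximal length in the fiber
`τ⁻¹(N(w) ∩ Δ(1))`, i.e. the maximal elements `w_{I,max}` of all lower ideals `I`. -/
noncomputable def Wmax (Δ : Set V) (d : V → ℤ) (Pos : Set V) : Set (V ≃ₗ[ℝ] V) :=
  {w ∈ W0 Δ d Pos | ∀ w' ∈ W0 Δ d Pos,
    invSet Pos w' ∩ level Δ d 1 = invSet Pos w ∩ level Δ d 1 →
    invSet Pos w' ⊆ invSet Pos w}

set_option linter.unusedSectionVars false
set_option maxHeartbeats 1000000

-- ====== basic sref lemmas ======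

lemma sref_apply (α x : V) : sref α x = x - (2 * ⟪x,α⟫/⟪α,α⟫) • α := by
  show Submodule.reflection ((ℝ ∙ α)ᗮ) x = _
  rw [Submodule.reflection_orthogonal_apply, Submodule.reflection_singleton_apply,
    real_inner_self_eq_norm_sq, real_inner_comm]
  simp only [RCLike.ofReal_real_eq_id, id]
  match_scalars <;> ring

lemma sref_symm_eq (α : V) : (sref α).symm = sref α := rfl

section main
variable {Δ : Set V} {d : V → ℤ} {Pos : Set V}

lemma GRS.inner_self_pos (h : GradedRootSystem Δ d Pos) {α : V} (hα : α ∈ Δ) :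
    0 < ⟪α,α⟫ :=
  lt_of_le_of_ne real_inner_self_nonneg (Ne.symm (inner_self_ne_zero.mpr (h.nonzero α hα)))

lemma GRS.pos_not_neg (h : GradedRootSystem Δ d Pos) {γ : V} (hγ : γ ∈ Pos) : -γ ∉ Pos :=
  (h.pos_iff γ (h.pos_subset hγ)).mp hγ

lemma GRS.pos_of_not (h : GradedRootSystem Δ d Pos) {γ : V} (hγ : γ ∈ Δ) (hn : -γ ∉ Pos) :
    γ ∈ Pos := (h.pos_iff γ hγ).mpr hn

lemma GRS.neg_pos_of_not (h : GradedRootSystem Δ d Pos) {γ : V} (hγ : γ ∈ Δ) (hn : γ ∉ Pos) :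
    -γ ∈ Pos := by
  by_contra hc
  exact hn ((h.pos_iff γ hγ).mpr hc)

lemma GRS.d_nonneg_of_pos (h : GradedRootSystem Δ d Pos) {γ : V} (hγ : γ ∈ Pos) : 0 ≤ d γ := by
  by_contra hc
  push_neg at hc
  have hγΔ := h.pos_subset hγ
  have h1 : -γ ∈ Δ := h.neg_mem γ hγΔ
  have h2 : -γ ∈ Pos := h.compatible _ h1 (by rw [h.grade_neg γ hγΔ]; omega)
  exact GRS.pos_not_neg h hγ h2

-- strict Cauchy-Schwarz for non-proportional roots
lemma GRS.strictCS (h : GradedRootSystem Δ d Pos) {α β : V} (ha : α ∈ Δ) (hb : β ∈ Δ)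
    (h1 : β ≠ α) (h2 : β ≠ -α) : ⟪β,α⟫^2 < ⟪β,β⟫ * ⟪α,α⟫ := by
  have hα0 := h.nonzero α ha
  have hβ0 := h.nonzero β hb
  have hna : 0 < ‖α‖ := norm_pos_iff.mpr hα0
  have hnb : 0 < ‖β‖ := norm_pos_iff.mpr hβ0
  have key : |⟪β,α⟫| < ‖β‖ * ‖α‖ := by
    rw [abs_lt]
    constructor
    · have hiff := inner_lt_norm_mul_iff_real (x := β) (y := -α)
      have hcond : ‖-α‖ • β ≠ ‖β‖ • -α := by
        intro he
        rw [norm_neg] at he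
        have : β = (-(‖β‖/‖α‖)) • α := by
          rw [neg_smul, ← smul_neg]
          rw [div_eq_inv_mul, mul_smul]
          rw [← he, smul_smul, inv_mul_cancel₀ (ne_of_gt hna), one_smul]
        rcases h.reduced α ha _ (this ▸ hb) with hc | hc
        · have : ‖β‖/‖α‖ < 0 := by rw [show ‖β‖/‖α‖ = -(-(‖β‖/‖α‖)) by ring, hc]; norm_num
          have : (0:ℝ) < ‖β‖/‖α‖ := by positivity
          linarith
        · apply h2
          rw [this]
          have : -(‖β‖/‖α‖) = -1 := hc
          rw [this]; simp
      have := hiff.mpr hcond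
      rw [inner_neg_right, norm_neg] at this
      linarith
    · have hiff := inner_lt_norm_mul_iff_real (x := β) (y := α)
      have hcond : ‖α‖ • β ≠ ‖β‖ • α := by
        intro he
        have : β = (‖β‖/‖α‖) • α := by
          rw [div_eq_inv_mul, mul_smul, ← he, smul_smul, inv_mul_cancel₀ (ne_of_gt hna), one_smul]
        rcases h.reduced α ha _ (this ▸ hb) with hc | hc
        · apply h1; rw [this, hc, one_smul]
        · have h3 : (0:ℝ) < ‖β‖/‖α‖ := by positivity
          rw [hc] at h3; norm_num at h3
      exact hiff.mpr hcond
  have h3 : ⟪β,β⟫ = ‖β‖^2 := real_inner_self_eq_norm_sq β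
  have h4 : ⟪α,α⟫ = ‖α‖^2 := real_inner_self_eq_norm_sq α
  have h5 : |⟪β,α⟫|^2 < (‖β‖*‖α‖)^2 := by
    apply sq_lt_sq' <;> nlinarith [abs_nonneg ⟪β,α⟫]
  rw [sq_abs] at h5
  rw [h3, h4]; nlinarith

-- Lemma L : sum of two roots with negative inner product is a root
lemma GRS.sum_mem (h : GradedRootSystem Δ d Pos) {α β : V} (hα : α ∈ Δ) (hβ : β ∈ Δ)
    (hin : ⟪β,α⟫ < 0) (hne : β ≠ -α) : β + α ∈ Δ := by
  have hαα := GRS.inner_self_pos h hα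
  have hββ := GRS.inner_self_pos h hβ
  have hβα : β ≠ α := by rintro rfl; linarith
  obtain ⟨n, hn⟩ := h.crystallographic α hα β hβ
  obtain ⟨m, hm⟩ := h.crystallographic β hβ α hα
  have hcs := GRS.strictCS h hα hβ hβα hne
  have hn' : (n:ℝ) < 0 := by
    rw [hn]; apply div_neg_of_neg_of_pos; · linarith;
    · exact hαα
  have hm' : (m:ℝ) < 0 := by
    rw [hm]; apply div_neg_of_neg_of_pos
    · rw [real_inner_comm]; linarith
    · exact hββ
  have h4 : (0:ℝ) < ⟪α,α⟫*⟪β,β⟫ := mul_pos hαα hββ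
  have hprodeq : (n:ℝ)*m = 4*⟪β,α⟫^2/(⟪α,α⟫*⟪β,β⟫) := by
    rw [hn, hm, real_inner_comm α β]; field_simp; ring
  have hprod : (n:ℝ)*m < 4 := by
    rw [hprodeq, div_lt_iff₀ h4]; nlinarith
  have hn0 : n < 0 := by exact_mod_cast hn'
  have hm0 : m < 0 := by exact_mod_cast hm'
  have hint : n*m ≤ 3 := by
    have h5 : ((n*m : ℤ):ℝ) < 4 := by push_cast; linarith
    have : n*m < 4 := by exact_mod_cast h5
    omega
  have hcase : n = -1 ∨ m = -1 := by
    by_contra hcon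
    push_neg at hcon
    have h6 : n ≤ -2 := by omega
    have h7 : m ≤ -2 := by omega
    nlinarith
  rcases hcase with hc | hc
  · have hr := h.reflect_mem α hα β hβ
    rw [← hn, hc] at hr
    push_cast at hr
    rw [neg_smul, one_smul, sub_neg_eq_add] at hr
    exact hr
  · have hr := h.reflect_mem β hβ α hα
    rw [← hm, hc] at hr
    push_cast at hr
    rw [neg_smul, one_smul, sub_neg_eq_add] at hr
    rw [add_comm]
    exact hr

-- Lemma L' : difference of two roots with positive inner product is a root
lemma GRS.sub_mem (h : GradedRootSystem Δ d Pos) {α β : V} (hα : α ∈ Δ) (hβ : β ∈ Δ)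
    (hin : 0 < ⟪β,α⟫) (hne : β ≠ α) : β - α ∈ Δ := by
  have := GRS.sum_mem h (h.neg_mem α hα) hβ
    (by rw [inner_neg_right]; linarith) (by simpa using hne)
  rwa [← sub_eq_add_neg] at this

-- elements of the Weyl group preserve the root system
lemma GRS.weyl_maps (h : GradedRootSystem Δ d Pos) {w : V ≃ₗ[ℝ] V} (hw : w ∈ weyl Δ) :
    (∀ x ∈ Δ, w x ∈ Δ) ∧ (∀ x ∈ Δ, w.symm x ∈ Δ) := by
  refine Subgroup.closure_induction
    (p := fun g _ => (∀ x ∈ Δ, g x ∈ Δ) ∧ (∀ x ∈ Δ, g.symm x ∈ Δ)) ?_ ?_ ?_ ?_ hw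
  · rintro g ⟨α, hα, rfl⟩
    constructor
    · intro x hx; rw [sref_apply]; exact h.reflect_mem α hα x hx
    · intro x hx; rw [sref_symm_eq, sref_apply]; exact h.reflect_mem α hα x hx
  · exact ⟨fun x hx => hx, fun x hx => hx⟩
  · rintro g₁ g₂ _ _ ⟨f1, b1⟩ ⟨f2, b2⟩
    constructor
    · intro x hx; exact f1 _ (f2 x hx)
    · intro x hx
      have : (g₁ * g₂).symm x = g₂.symm (g₁.symm x) := rfl
      rw [this]; exact b2 _ (b1 x hx)
  · rintro g _ ⟨f, b⟩
    constructor
    · intro x hx; exact b x hx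
    · intro x hx
      have : (g⁻¹).symm x = g x := rfl
      rw [this]; exact f x hx

-- no nonempty sum of positive roots is zero
lemma GRS.multiset_sum_ne_zero (h : GradedRootSystem Δ d Pos) :
    ∀ n : ℕ, ∀ l : Multiset V, l.card = n → (∀ a ∈ l, a ∈ Pos) → l ≠ 0 → l.sum ≠ 0 := by
  classical
  intro n
  induction n using Nat.strong_induction_on with
  | _ n IH =>
  intro l hcard hmem hne hsum
  obtain ⟨a, ha⟩ := Multiset.exists_mem_of_ne_zero hne
  set t := l.erase a with ht
  have hl : l = a ::ₘ t := (Multiset.cons_erase ha).symm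
  have haP := hmem a ha
  have haΔ := h.pos_subset haP
  have htmem : ∀ b ∈ t, b ∈ Pos := fun b hb => hmem b (by rw [hl]; exact Multiset.mem_cons_of_mem hb)
  rcases eq_or_ne t 0 with h0 | ht0
  · rw [hl, h0] at hsum; simp at hsum; exact h.nonzero a haΔ hsum
  · have hsum' : a + t.sum = 0 := by rw [hl] at hsum; simpa using hsum
    have hts : t.sum = -a := by
      have := hsum'
      rw [add_comm] at this
      exact eq_neg_of_add_eq_zero_left this
    have hinner : ⟪a, t.sum⟫ = -⟪a,a⟫ := by rw [hts, inner_neg_right]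
    have hAA := GRS.inner_self_pos h haΔ
    have hex : ∃ b ∈ t, ⟪a,b⟫ < 0 := by
      by_contra hc
      push_neg at hc
      have hmapeq : ⟪a, t.sum⟫ = (t.map (fun b => ⟪a,b⟫)).sum := by
        simpa using map_multiset_sum (innerSL ℝ a) t
      have : (0:ℝ) ≤ ⟪a, t.sum⟫ := by
        rw [hmapeq]
        apply Multiset.sum_nonneg
        intro x hx
        obtain ⟨b, hb, rfl⟩ := Multiset.mem_map.mp hx
        exact hc b hb
      linarith
    obtain ⟨b, hbt, hab⟩ := hex
    have hbP := htmem b hbt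
    have hbΔ := h.pos_subset hbP
    have hba : b ≠ -a := by
      rintro rfl
      exact GRS.pos_not_neg h haP hbP
    have hab2 : ⟪b,a⟫ < 0 := by rwa [real_inner_comm] at hab
    have habΔ : b + a ∈ Δ := GRS.sum_mem h haΔ hbΔ hab2 hba
    have habP : b + a ∈ Pos := h.pos_add b hbP a haP habΔ
    set l' : Multiset V := (b + a) ::ₘ (t.erase b) with hl'
    have htcard : t.card = n - 1 := by
      have : l.card = t.card + 1 := by rw [hl]; simp
      omega
    have hn2 : 2 ≤ n := by
      have h1 : 1 ≤ t.card := Multiset.card_pos.mpr ht0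
      omega
    have hl'card : l'.card = n - 1 := by
      rw [hl']
      have : (t.erase b).card = t.card - 1 := Multiset.card_erase_of_mem hbt
      simp only [Multiset.card_cons, this]
      have h1 : 1 ≤ t.card := Multiset.card_pos.mpr ht0
      omega
    have hl'mem : ∀ x ∈ l', x ∈ Pos := by
      intro x hx
      rw [hl'] at hx
      rcases Multiset.mem_cons.mp hx with rfl | hx'
      · exact habP
      · exact htmem x (Multiset.mem_of_mem_erase hx')
    have hl'sum : l'.sum = 0 := by
      have hterase : t.sum = b + (t.erase b).sum := by
        conv_lhs => rw [← Multiset.cons_erase hbt]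
        simp
      rw [hl', Multiset.sum_cons]
      have : b + a + (t.erase b).sum = a + t.sum := by rw [hterase]; abel
      rw [this, hsum']
    exact IH (n-1) (by omega) l' hl'card hl'mem (by simp [hl']) hl'sum

-- height function
noncomputable def ht (Δ Pos : Set V) (x : V) : ℕ :=
  {y ∈ Δ | x - y ∈ AddSubmonoid.closure Pos ∧ x ≠ y}.ncard

lemma GRS.mem_closure_sum {x : V} (hx : x ∈ AddSubmonoid.closure Pos) :
    ∃ l : Multiset V, (∀ a ∈ l, a ∈ Pos) ∧ l.sum = x := by
  refine AddSubmonoid.closure_induction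
    (motive := fun y _ => ∃ l : Multiset V, (∀ a ∈ l, a ∈ Pos) ∧ l.sum = y) ?_ ?_ ?_ hx
  · intro y hy; exact ⟨{y}, by simpa using hy, by simp⟩
  · exact ⟨0, by simp, rfl⟩
  · rintro y z _ _ ⟨l₁, hm1, hs1⟩ ⟨l₂, hm2, hs2⟩
    refine ⟨l₁ + l₂, ?_, by rw [Multiset.sum_add, hs1, hs2]⟩
    intro a ha
    rcases Multiset.mem_add.mp ha with h' | h'
    · exact hm1 a h'
    · exact hm2 a h'

lemma GRS.closure_add_ne_zero (h : GradedRootSystem Δ d Pos) {x y : V}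
    (hx : x ∈ AddSubmonoid.closure Pos) (hxne : x ≠ 0)
    (hy : y ∈ AddSubmonoid.closure Pos) (hyne : y ≠ 0) : x + y ≠ 0 := by
  obtain ⟨l₁, hm1, hs1⟩ := GRS.mem_closure_sum (Pos := Pos) hx
  obtain ⟨l₂, hm2, hs2⟩ := GRS.mem_closure_sum (Pos := Pos) hy
  have hl1 : l₁ ≠ 0 := by rintro rfl; simp at hs1; exact hxne hs1.symm
  intro hc
  have hsum : (l₁ + l₂).sum = 0 := by rw [Multiset.sum_add, hs1, hs2]; exact hc
  refine GRS.multiset_sum_ne_zero h (l₁+l₂).card (l₁+l₂) rfl ?_ ?_ hsum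
  · intro a ha
    rcases Multiset.mem_add.mp ha with h' | h'
    · exact hm1 a h'
    · exact hm2 a h'
  · intro hc0
    apply hl1
    have := congrArg Multiset.card hc0
    simp at this
    exact this.1

lemma GRS.ht_lt (h : GradedRootSystem Δ d Pos) {a δ : V} (haΔ : a ∈ Δ)
    (hd : δ - a ∈ AddSubmonoid.closure Pos) (hne : δ ≠ a) :
    ht Δ Pos a < ht Δ Pos δ := by
  have hfin : {y ∈ Δ | δ - y ∈ AddSubmonoid.closure Pos ∧ δ ≠ y}.Finite :=
    h.finite.subset (fun y hy => hy.1)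
  apply Set.ncard_lt_ncard ?_ hfin
  constructor
  · rintro y ⟨hyΔ, hya, hya'⟩
    refine ⟨hyΔ, ?_, ?_⟩
    · have : δ - y = (δ - a) + (a - y) := by abel
      rw [this]
      exact AddSubmonoid.add_mem _ hd hya
    · intro he
      subst he
      have h1 : δ - a ≠ 0 := sub_ne_zero.mpr hne
      have h2 : a - δ ≠ 0 := sub_ne_zero.mpr (Ne.symm hne)
      exact GRS.closure_add_ne_zero h hd h1 hya h2 (by abel)
  · intro hsub
    exact (hsub ⟨haΔ, hd, hne⟩).2.2 rfl

-- a simple reflection permutes the positive roots other than the simple root itself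
lemma GRS.sref_simple_pos (h : GradedRootSystem Δ d Pos) {α : V} (hαs : α ∈ simpleRoots Pos)
    {δ : V} (hδP : δ ∈ Pos) (hne : δ ≠ α) : sref α δ ∈ Pos := by
  obtain ⟨hαP, hαnd⟩ := hαs
  have hαΔ := h.pos_subset hαP
  have hδΔ := h.pos_subset hδP
  have hAA := GRS.inner_self_pos h hαΔ
  have hBB := GRS.inner_self_pos h hδΔ
  have hδnα : δ ≠ -α := fun he => GRS.pos_not_neg h hαP (he ▸ hδP)
  have hdec : ∀ x, x ∈ Pos → α - x ∈ Pos → False := by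
    intro x hx hax
    exact hαnd ⟨x, hx, α - x, hax, by abel⟩
  obtain ⟨c, hc⟩ := h.crystallographic α hαΔ δ hδΔ
  have hsref : sref α δ = δ - (c:ℝ)•α := by rw [sref_apply, ← hc]
  have hmem : sref α δ ∈ Δ := by rw [sref_apply]; exact h.reflect_mem α hαΔ δ hδΔ
  have hiδα : ⟪δ,α⟫ = (c:ℝ)*⟪α,α⟫/2 := by
    rw [hc]; field_simp
  obtain ⟨c', hc'⟩ := h.crystallographic δ hδΔ α hαΔ
  have hcs := GRS.strictCS h hαΔ hδΔ hne hδnα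
  have hiαδ : ⟪α,δ⟫ = (c':ℝ)*⟪δ,δ⟫/2 := by
    rw [hc']; field_simp
  have hcomm : ⟪α,δ⟫ = ⟪δ,α⟫ := real_inner_comm δ α
  have hbound : -3 ≤ c ∧ c ≤ 3 := by
    rcases lt_trichotomy (⟪δ,α⟫:ℝ) 0 with hi | hi | hi
    · have hcneg : (c:ℝ) < 0 := by nlinarith
      have hc'neg : (c':ℝ) < 0 := by nlinarith
      have hc0 : c < 0 := by exact_mod_cast hcneg
      have hc'0 : c' < 0 := by exact_mod_cast hc'neg
      have hprod : (c:ℝ)*(c':ℝ) < 4 := by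
        have : (c:ℝ)*(c':ℝ) = 4*⟪δ,α⟫^2/(⟪α,α⟫*⟪δ,δ⟫) := by
          rw [hc, hc', hcomm]; field_simp; ring
        rw [this, div_lt_iff₀ (by positivity)]
        nlinarith
      have hint : c*c' ≤ 3 := by
        have h5 : ((c*c' : ℤ):ℝ) < 4 := by push_cast; linarith
        have : c*c' < 4 := by exact_mod_cast h5
        omega
      constructor
      · by_contra hcon
        push_neg at hcon
        have : c ≤ -4 := by omega
        nlinarith
      · omega
    · have : (c:ℝ) = 0 := by rw [hc, hi]; simp
      have : c = 0 := by exact_mod_cast this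
      omega
    · have hcpos : (0:ℝ) < c := by nlinarith
      have hc'pos : (0:ℝ) < c' := by nlinarith
      have hc0 : 0 < c := by exact_mod_cast hcpos
      have hc'0 : 0 < c' := by exact_mod_cast hc'pos
      have hprod : (c:ℝ)*(c':ℝ) < 4 := by
        have : (c:ℝ)*(c':ℝ) = 4*⟪δ,α⟫^2/(⟪α,α⟫*⟪δ,δ⟫) := by
          rw [hc, hc', hcomm]; field_simp; ring
        rw [this, div_lt_iff₀ (by positivity)]
        nlinarith
      have hint : c*c' ≤ 3 := by
        have h5 : ((c*c' : ℤ):ℝ) < 4 := by push_cast; linarith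
        have : c*c' < 4 := by exact_mod_cast h5
        omega
      constructor
      · omega
      · by_contra hcon
        push_neg at hcon
        have : 4 ≤ c := by omega
        nlinarith
  have hnotmul : ∀ r : ℝ, r ≠ 1 → r ≠ -1 → δ ≠ r • α := by
    intro r h1 h2 he
    rcases h.reduced α hαΔ r (he ▸ hδΔ) with hr | hr
    · exact h1 hr
    · exact h2 hr
  obtain ⟨hb1, hb2⟩ := hbound
  interval_cases c
  · have hi3 : ⟪δ,α⟫ = -3*⟪α,α⟫/2 := by rw [hiδα]; push_cast; ring
    have h1 : δ + α ∈ Δ := GRS.sum_mem h hαΔ hδΔ (by nlinarith) hδnα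
    have h1P : δ + α ∈ Pos := h.pos_add δ hδP α hαP h1
    have h2 : (δ + α) + α ∈ Δ := by
      apply GRS.sum_mem h hαΔ h1 ?_ ?_
      · rw [inner_add_left]; nlinarith
      · intro he
        have : δ = (-2:ℝ) • α := by
          have h7 : δ = -α - α := by linear_combination (norm := module) he
          rw [h7]; module
        exact hnotmul (-2) (by norm_num) (by norm_num) this
    have h2P : (δ + α) + α ∈ Pos := h.pos_add _ h1P α hαP h2
    have heq : sref α δ = ((δ + α) + α) + α := by rw [hsref]; push_cast; module
    rw [heq]
    apply h.pos_add _ h2P α hαP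
    rw [← heq]; exact hmem
  · have hi2 : ⟪δ,α⟫ = -2*⟪α,α⟫/2 := by rw [hiδα]; push_cast; ring
    have h1 : δ + α ∈ Δ := GRS.sum_mem h hαΔ hδΔ (by nlinarith) hδnα
    have h1P : δ + α ∈ Pos := h.pos_add δ hδP α hαP h1
    have heq : sref α δ = (δ + α) + α := by rw [hsref]; push_cast; module
    rw [heq]
    apply h.pos_add _ h1P α hαP
    rw [← heq]; exact hmem
  · have heq : sref α δ = δ + α := by rw [hsref]; push_cast; module
    rw [heq]
    apply h.pos_add δ hδP α hαP
    rw [← heq]; exact hmem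
  · have heq : sref α δ = δ := by rw [hsref]; push_cast; module
    rw [heq]; exact hδP
  · have heq : sref α δ = δ - α := by rw [hsref]; push_cast; module
    rw [heq]
    by_contra hnp
    have hroot : δ - α ∈ Δ := by rw [← heq]; exact hmem
    have hneg : α - δ ∈ Pos := by
      have := GRS.neg_pos_of_not h hroot hnp
      rwa [neg_sub] at this
    exact hdec δ hδP hneg
  · have hi2 : ⟪δ,α⟫ = 2*⟪α,α⟫/2 := by rw [hiδα]; push_cast; ring
    have hβ1 : δ - α ∈ Δ := GRS.sub_mem h hαΔ hδΔ (by nlinarith) hne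
    have hβ1P : δ - α ∈ Pos := by
      by_contra hnp
      have hneg : α - δ ∈ Pos := by
        have := GRS.neg_pos_of_not h hβ1 hnp
        rwa [neg_sub] at this
      exact hdec δ hδP hneg
    have heq : sref α δ = (δ - α) - α := by rw [hsref]; push_cast; module
    rw [heq]
    by_contra hnp
    have hroot : (δ - α) - α ∈ Δ := by rw [← heq]; exact hmem
    have hneg : α - (δ - α) ∈ Pos := by
      have := GRS.neg_pos_of_not h hroot hnp
      rwa [neg_sub] at this
    exact hdec (δ - α) hβ1P hneg
  · have hi3 : ⟪δ,α⟫ = 3*⟪α,α⟫/2 := by rw [hiδα]; push_cast; ring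
    have hβ1 : δ - α ∈ Δ := GRS.sub_mem h hαΔ hδΔ (by nlinarith) hne
    have hβ1P : δ - α ∈ Pos := by
      by_contra hnp
      have hneg : α - δ ∈ Pos := by
        have := GRS.neg_pos_of_not h hβ1 hnp
        rwa [neg_sub] at this
      exact hdec δ hδP hneg
    have hβ1α : δ - α ≠ α := by
      intro he
      have : δ = (2:ℝ) • α := by
        have h7 : δ = α + α := by linear_combination (norm := module) he
        rw [h7]; module
      exact hnotmul 2 (by norm_num) (by norm_num) this
    have hβ2 : (δ - α) - α ∈ Δ := by
      apply GRS.sub_mem h hαΔ hβ1 ?_ hβ1α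
      rw [inner_sub_left]; nlinarith
    have hβ2P : (δ - α) - α ∈ Pos := by
      by_contra hnp
      have hneg : α - (δ - α) ∈ Pos := by
        have := GRS.neg_pos_of_not h hβ2 hnp
        rwa [neg_sub] at this
      exact hdec (δ - α) hβ1P hneg
    have heq : sref α δ = ((δ - α) - α) - α := by rw [hsref]; push_cast; module
    rw [heq]
    by_contra hnp
    have hroot : ((δ - α) - α) - α ∈ Δ := by rw [← heq]; exact hmem
    have hneg : α - ((δ - α) - α) ∈ Pos := by
      have := GRS.neg_pos_of_not h hroot hnp
      rwa [neg_sub] at this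
    exact hdec ((δ - α) - α) hβ2P hneg

-- three-term recombination lemma
lemma GRS.three_term (h : GradedRootSystem Δ d Pos) {a₁ a₂ b : V}
    (h1 : a₁ ∈ Δ) (h2 : a₂ ∈ Δ) (hb : b ∈ Δ)
    (h12 : a₁ + a₂ ∈ Δ) (hs : a₁ + a₂ + b ∈ Δ) (hn1 : a₁ + b ≠ 0) (hn2 : a₂ + b ≠ 0) :
    a₁ + b ∈ Δ ∨ a₂ + b ∈ Δ := by
  by_contra hc
  push_neg at hc
  obtain ⟨hc1, hc2⟩ := hc
  have hi1 : 0 ≤ ⟪a₁,b⟫ := by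
    by_contra hlt
    push_neg at hlt
    refine hc1 (GRS.sum_mem h hb h1 hlt ?_)
    intro he
    exact hn1 (by rw [he]; simp)
  have hi2 : 0 ≤ ⟪a₂,b⟫ := by
    by_contra hlt
    push_neg at hlt
    refine hc2 (GRS.sum_mem h hb h2 hlt ?_)
    intro he
    exact hn2 (by rw [he]; simp)
  have k1 : ⟪a₁+a₂+b, a₁⟫ ≤ 0 := by
    by_contra hgt
    push_neg at hgt
    have hne : a₁ + a₂ + b ≠ a₁ := by
      intro he
      apply hn2
      have h8 : a₂ + b = (a₁ + a₂ + b) - a₁ := by abel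
      rw [h8, he]; simp
    have := GRS.sub_mem h h1 hs hgt hne
    rw [show a₁ + a₂ + b - a₁ = a₂ + b from by abel] at this
    exact hc2 this
  have k2 : ⟪a₁+a₂+b, a₂⟫ ≤ 0 := by
    by_contra hgt
    push_neg at hgt
    have hne : a₁ + a₂ + b ≠ a₂ := by
      intro he
      apply hn1
      have h8 : a₁ + b = (a₁ + a₂ + b) - a₂ := by abel
      rw [h8, he]; simp
    have := GRS.sub_mem h h2 hs hgt hne
    rw [show a₁ + a₂ + b - a₂ = a₁ + b from by abel] at this
    exact hc1 this
  have hpos := GRS.inner_self_pos h h12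
  have e1 : ⟪a₁+a₂+b, a₁⟫ + ⟪a₁+a₂+b, a₂⟫
      = ⟪a₁+a₂, a₁+a₂⟫ + ⟪a₁,b⟫ + ⟪a₂,b⟫ := by
    simp only [inner_add_left, inner_add_right]
    rw [real_inner_comm b a₁, real_inner_comm b a₂]
    ring
  linarith

-- every decomposable positive root has a decomposition with simple first part
lemma GRS.exists_simple_decomp (h : GradedRootSystem Δ d Pos) {δ : V} (hδ : δ ∈ Pos)
    (hns : δ ∉ simpleRoots Pos) : ∃ α ∈ simpleRoots Pos, ∃ b ∈ Pos, δ = α + b := by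
  classical
  have hex : ∃ a, a ∈ Pos ∧ δ - a ∈ Pos := by
    simp only [simpleRoots, Set.mem_setOf_eq] at hns
    push_neg at hns
    obtain ⟨a, haP, b, hbP, heq⟩ := hns hδ
    exact ⟨a, haP, by rw [heq, add_sub_cancel_left]; exact hbP⟩
  set A := {a | a ∈ Pos ∧ δ - a ∈ Pos} with hA
  have hAfin : A.Finite := h.finite.subset (fun a ha => h.pos_subset ha.1)
  obtain ⟨a, haA, hmin⟩ := Set.exists_min_image A (ht Δ Pos) hAfin hex
  obtain ⟨haP, hbP⟩ := haA
  refine ⟨a, ⟨haP, ?_⟩, δ - a, hbP, by abel⟩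
  rintro ⟨a₁, h1P, a₂, h2P, heq⟩
  have h1Δ := h.pos_subset h1P
  have h2Δ := h.pos_subset h2P
  have hbΔ := h.pos_subset hbP
  have h12Δ : a₁ + a₂ ∈ Δ := heq ▸ h.pos_subset haP
  have hsΔ : a₁ + a₂ + (δ - a) ∈ Δ := by
    have he2 : a₁ + a₂ + (δ - a) = δ := by rw [← heq]; abel
    rw [he2]; exact h.pos_subset hδ
  have hn1 : a₁ + (δ - a) ≠ 0 := by
    intro he
    have h9 : δ - a = -a₁ := by
      rw [add_comm] at he
      exact eq_neg_of_add_eq_zero_left he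
    exact GRS.pos_not_neg h h1P (h9 ▸ hbP)
  have hn2 : a₂ + (δ - a) ≠ 0 := by
    intro he
    have h9 : δ - a = -a₂ := by
      rw [add_comm] at he
      exact eq_neg_of_add_eq_zero_left he
    exact GRS.pos_not_neg h h2P (h9 ▸ hbP)
  have h3 := GRS.three_term h h1Δ h2Δ hbΔ h12Δ hsΔ hn1 hn2
  have hlt : ∀ x y : V, x ∈ Pos → y ∈ Pos → a = x + y → (y + (δ - a) ∈ Δ) → False := by
    intro x y hxP hyP hxy hyΔ'
    have hyP' : y + (δ - a) ∈ Pos := h.pos_add y hyP _ hbP hyΔ'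
    have hxA : x ∈ A := by
      refine ⟨hxP, ?_⟩
      have h9 : δ - x = y + (δ - a) := by rw [hxy]; abel
      rw [h9]; exact hyP'
    have hlt2 : ht Δ Pos x < ht Δ Pos a := by
      apply GRS.ht_lt h (h.pos_subset hxP) ?_ ?_
      · have h9 : a - x = y := by rw [hxy]; abel
        rw [h9]
        exact AddSubmonoid.subset_closure hyP
      · intro he
        have h9 : y = 0 := by
          rw [← he] at hxy
          exact (left_eq_add.mp hxy)
        exact h.nonzero y (h.pos_subset hyP) h9
    have := hmin x hxA
    omega
  rcases h3 with hcase | hcase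
  · exact hlt a₂ a₁ h2P h1P (by rw [heq]; abel) hcase
  · exact hlt a₁ a₂ h1P h2P heq hcase

-- key splitting lemma
lemma GRS.key (h : GradedRootSystem Δ d Pos) {w : V ≃ₗ[ℝ] V} (hw : w ∈ W0 Δ d Pos)
    (hH : ∀ α ∈ simpleRoots Pos, w.symm α ∈ levelLE Δ d 1) :
    ∀ n : ℕ,
      (∀ γ ∈ Δ, ht Δ Pos (w γ) = n → 1 ≤ d γ → w γ ∈ Pos →
        ∃ ε ∈ Δ, d ε = 1 ∧ w ε ∈ Pos ∧ (γ = ε ∨ (γ - ε ∈ Δ ∧ w (γ - ε) ∈ Pos))) ∧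
      (∀ ξ μ γ : V, ξ ∈ Δ → μ ∈ Δ → γ ∈ Δ → γ = ξ + μ → d ξ ≤ 1 → 1 ≤ d μ →
        w ξ ∈ Pos → w μ ∈ Pos → ht Δ Pos (w μ) = n → 2 ≤ d γ →
        ∃ ε ∈ Δ, d ε = 1 ∧ w ε ∈ Pos ∧ γ - ε ∈ Δ ∧ w (γ - ε) ∈ Pos) := by
  have hwΔ : ∀ x ∈ Δ, w x ∈ Δ := (GRS.weyl_maps h hw.1).1
  have hwΔ' : ∀ x ∈ Δ, w.symm x ∈ Δ := (GRS.weyl_maps h hw.1).2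
  intro n
  induction n using Nat.strong_induction_on with
  | _ n IH =>
  have hT : ∀ γ ∈ Δ, ht Δ Pos (w γ) = n → 1 ≤ d γ → w γ ∈ Pos →
      ∃ ε ∈ Δ, d ε = 1 ∧ w ε ∈ Pos ∧ (γ = ε ∨ (γ - ε ∈ Δ ∧ w (γ - ε) ∈ Pos)) := by
    intro γ hγΔ hht hd hwγP
    by_cases hd1 : d γ = 1
    · exact ⟨γ, hγΔ, hd1, hwγP, Or.inl rfl⟩
    have hd2 : 2 ≤ d γ := by omega
    have hδns : w γ ∉ simpleRoots Pos := by
      intro hs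
      have h2 := (hH _ hs).2
      rw [LinearEquiv.symm_apply_apply] at h2
      omega
    obtain ⟨α, hαs, b, hbP, hab⟩ := GRS.exists_simple_decomp h hwγP hδns
    have hαP := hαs.1
    have hαΔ := h.pos_subset hαP
    have hbΔ := h.pos_subset hbP
    set γ₁ := w.symm α with hγ₁
    set γ₂ := w.symm b with hγ₂
    have hγ1Δ : γ₁ ∈ Δ := hwΔ' α hαΔ
    have hγ2Δ : γ₂ ∈ Δ := hwΔ' b hbΔ
    have hsplit : γ = γ₁ + γ₂ := by
      have := congrArg w.symm hab
      rwa [LinearEquiv.symm_apply_apply, map_add] at this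
    have hd1' : d γ₁ ≤ 1 := (hH α hαs).2
    have hdadd : d γ = d γ₁ + d γ₂ := by
      rw [hsplit]
      exact h.grade_add _ hγ1Δ _ hγ2Δ (hsplit ▸ hγΔ)
    have hwγ1 : w γ₁ = α := w.apply_symm_apply α
    have hwγ2 : w γ₂ = b := w.apply_symm_apply b
    have hht2 : ht Δ Pos (w γ₂) < n := by
      rw [hwγ2, ← hht]
      apply GRS.ht_lt h hbΔ
      · rw [hab, add_sub_cancel_right]
        exact AddSubmonoid.subset_closure hαP
      · intro he
        apply h.nonzero α hαΔ
        have h9 : α + b = b := by rw [← hab, he]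
        exact add_eq_right.mp h9
    obtain ⟨ε, hεΔ, hdε, hwεP, hrest⟩ :=
      (IH _ hht2).2 γ₁ γ₂ γ hγ1Δ hγ2Δ hγΔ hsplit hd1' (by omega)
        (by rw [hwγ1]; exact hαP) (by rw [hwγ2]; exact hbP) rfl hd2
    exact ⟨ε, hεΔ, hdε, hwεP, Or.inr hrest⟩
  refine ⟨hT, ?_⟩
  intro ξ μ γ hξΔ hμΔ hγΔ hsplit hdξ hdμ hwξP hwμP hhtμ hd2
  by_cases hξ1 : d ξ = 1
  · refine ⟨ξ, hξΔ, hξ1, hwξP, ?_, ?_⟩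
    · rw [show γ - ξ = μ from by rw [hsplit]; abel]; exact hμΔ
    · rw [show γ - ξ = μ from by rw [hsplit]; abel]; exact hwμP
  · have hdadd : d γ = d ξ + d μ := by
      rw [hsplit]; exact h.grade_add _ hξΔ _ hμΔ (hsplit ▸ hγΔ)
    have hdξ0 : d ξ ≤ 0 := by omega
    have hdμ2 : 2 ≤ d μ := by omega
    obtain ⟨ε₂, hε₂Δ, hdε₂, hwε₂P, hcase⟩ := hT μ hμΔ hhtμ (by omega) hwμP
    rcases hcase with rfl | ⟨hρΔ, hwρP⟩
    · omega
    · set ρ := μ - ε₂ with hρ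
      have hsum_ρ : ε₂ + ρ = μ := by rw [hρ]; abel
      have hdρeq : d μ = d ε₂ + d ρ := by
        have := h.grade_add ε₂ hε₂Δ ρ hρΔ (by rw [hsum_ρ]; exact hμΔ)
        rwa [hsum_ρ] at this
      have hn1 : ε₂ + ξ ≠ 0 := by
        intro he
        have hξe : ξ = -ε₂ := by
          rw [add_comm] at he
          exact eq_neg_of_add_eq_zero_left he
        rw [hξe, map_neg] at hwξP
        exact GRS.pos_not_neg h hwε₂P hwξP
      have hn2 : ρ + ξ ≠ 0 := by
        intro he
        have hξe : ξ = -ρ := by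
          rw [add_comm] at he
          exact eq_neg_of_add_eq_zero_left he
        rw [hξe, map_neg] at hwξP
        exact GRS.pos_not_neg h hwρP hwξP
      have hsum3 : ε₂ + ρ + ξ ∈ Δ := by
        rw [hsum_ρ, show μ + ξ = γ from by rw [hsplit]; abel]
        exact hγΔ
      rcases GRS.three_term h hε₂Δ hρΔ hξΔ (by rw [hsum_ρ]; exact hμΔ) hsum3 hn1 hn2
        with hcΔ | hcΔ
      · set ξ' := ξ + ε₂ with hξ'
        have hξ'Δ : ξ' ∈ Δ := by rw [hξ', add_comm]; exact hcΔ
        have hwξ'Δ : w ξ' ∈ Δ := hwΔ _ hξ'Δ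
        have hwξ'eq : w ξ' = w ξ + w ε₂ := map_add w ξ ε₂
        have hwξ'P : w ξ' ∈ Pos := by
          rw [hwξ'eq]
          exact h.pos_add _ hwξP _ hwε₂P (by rw [← hwξ'eq]; exact hwξ'Δ)
        have hdξ' : d ξ' ≤ 1 := by
          have h9 := h.grade_add ξ hξΔ ε₂ hε₂Δ (by rw [← hξ']; exact hξ'Δ)
          rw [← hξ'] at h9
          omega
        have hsplit' : γ = ξ' + ρ := by rw [hsplit, hξ', ← hsum_ρ]; abel
        have hht' : ht Δ Pos (w ρ) < n := by
          rw [← hhtμ]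
          apply GRS.ht_lt h (hwΔ ρ hρΔ)
          · have h9 : w μ - w ρ = w ε₂ := by
              rw [← map_sub]
              congr 1
              rw [hρ]; abel
            rw [h9]
            exact AddSubmonoid.subset_closure hwε₂P
          · intro he
            have h9 : μ = ρ := w.injective he
            apply h.nonzero ε₂ hε₂Δ
            have h10 : μ - ε₂ = μ := by rw [← hρ, ← h9]
            exact sub_eq_self.mp h10
        exact (IH _ hht').2 ξ' ρ γ hξ'Δ hρΔ hγΔ hsplit' hdξ' (by omega) hwξ'P hwρP rfl hd2
      · have hγε : γ - ε₂ = ξ + ρ := by rw [hsplit, ← hsum_ρ]; abel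
        refine ⟨ε₂, hε₂Δ, hdε₂, hwε₂P, ?_, ?_⟩
        · rw [hγε, add_comm]; exact hcΔ
        · rw [hγε, map_add]
          refine h.pos_add _ hwξP _ hwρP ?_
          rw [← map_add]
          apply hwΔ
          rw [add_comm]; exact hcΔ


lemma GRS.mem_of_closed (h : GradedRootSystem Δ d Pos) {w : V ≃ₗ[ℝ] V}
    (hw : w ∈ W0 Δ d Pos)
    (hH : ∀ α ∈ simpleRoots Pos, w.symm α ∈ levelLE Δ d 1) {M : Set V}
    (hM1 : ∀ ν ∈ Δ, d ν = 1 → w ν ∈ Pos → ν ∈ M) (hMc : IsClosedSubset Δ M) :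
    ∀ k : ℕ, ∀ γ ∈ Δ, (d γ).toNat = k → 1 ≤ d γ → w γ ∈ Pos → γ ∈ M := by
  intro k
  induction k using Nat.strong_induction_on with
  | _ k IH =>
  intro γ hγΔ hk hd hwP
  by_cases h1 : d γ = 1
  · exact hM1 γ hγΔ h1 hwP
  · have hd2 : 2 ≤ d γ := by omega
    obtain ⟨ε, hεΔ, hdε, hwεP, hcase⟩ :=
      (GRS.key h hw hH (ht Δ Pos (w γ))).1 γ hγΔ rfl hd hwP
    rcases hcase with rfl | ⟨hμΔ, hwμP⟩
    · omega
    · have hsum : ε + (γ - ε) = γ := by abel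
      have hdadd : d γ = d ε + d (γ - ε) := by
        have := h.grade_add ε hεΔ (γ - ε) hμΔ (by rw [hsum]; exact hγΔ)
        rwa [hsum] at this
      have hμM : γ - ε ∈ M :=
        IH (d (γ-ε)).toNat (by omega) _ hμΔ rfl (by omega) hwμP
      have hεM : ε ∈ M := hM1 ε hεΔ hdε hwεP
      have := hMc ε hεM (γ - ε) hμM (by rw [hsum]; exact hγΔ)
      rwa [hsum] at this


end main


/-- `W⁰_max = {w ∈ W⁰ : w⁻¹(α) ∈ Δ(≤ 1) for all simple roots α}`. -/
theorem stmt11 (Δ : Set V) (d : V → ℤ) (Pos : Set V)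
    (h : GradedRootSystem Δ d Pos) :
    Wmax Δ d Pos =
      {w ∈ W0 Δ d Pos | ∀ α ∈ simpleRoots Pos, w.symm α ∈ levelLE Δ d 1} := by
  ext w
  simp only [Wmax, Set.mem_setOf_eq]
  constructor
  · rintro ⟨hw0, hmax⟩
    refine ⟨hw0, ?_⟩
    intro α hαs
    have hαP := hαs.1
    have hαΔ := h.pos_subset hαP
    have hβΔ : w.symm α ∈ Δ := (GRS.weyl_maps h hw0.1).2 α hαΔ
    refine ⟨hβΔ, ?_⟩
    by_contra hd
    push_neg at hd
    set β := w.symm α with hβ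
    have hwβ : w β = α := w.apply_symm_apply α
    have hβP : β ∈ Pos := h.compatible β hβΔ (by omega)
    set w' := sref α * w with hw'
    have hw'mem : w' ∈ weyl Δ :=
      Subgroup.mul_mem _ (Subgroup.subset_closure ⟨α, hαΔ, rfl⟩) hw0.1
    have hw'app : ∀ x, w' x = sref α (w x) := fun x => rfl
    have hw'0 : w' ∈ W0 Δ d Pos := by
      refine ⟨hw'mem, ?_⟩
      intro γ hγ0
      have hwγP : w γ ∈ Pos := hw0.2 γ hγ0
      have hwγα : w γ ≠ α := by
        intro he
        have hγβ : γ = β := by rw [hβ, ← he, LinearEquiv.symm_apply_apply]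
        have hdγ : d γ = 0 := hγ0.2
        rw [hγβ] at hdγ
        omega
      rw [hw'app]
      exact GRS.sref_simple_pos h ⟨hαs.1, hαs.2⟩ hwγP hwγα
    have hI : invSet Pos w' ∩ level Δ d 1 = invSet Pos w ∩ level Δ d 1 := by
      ext γ
      simp only [Set.mem_inter_iff, invSet, level, Set.mem_setOf_eq]
      constructor
      · rintro ⟨⟨hγP, hneg⟩, hγΔ', hlev⟩
        refine ⟨⟨hγP, ?_⟩, hγΔ', hlev⟩
        by_contra hc
        have hwγΔ : w γ ∈ Δ := (GRS.weyl_maps h hw0.1).1 γ (h.pos_subset hγP)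
        have hwγP : w γ ∈ Pos := GRS.pos_of_not h hwγΔ hc
        have hne : w γ ≠ α := by
          intro he
          have hγβ : γ = β := by rw [hβ, ← he, LinearEquiv.symm_apply_apply]
          rw [hγβ] at hlev
          omega
        have := GRS.sref_simple_pos h ⟨hαs.1, hαs.2⟩ hwγP hne
        rw [hw'app] at hneg
        exact GRS.pos_not_neg h this hneg
      · rintro ⟨⟨hγP, hneg⟩, hγΔ', hlev⟩
        refine ⟨⟨hγP, ?_⟩, hγΔ', hlev⟩
        have hne : -(w γ) ≠ α := by
          intro he
          have h9 : w γ = -α := by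
            rw [← he]; simp
          have hγβ : γ = -β := by
            rw [hβ, ← map_neg, ← h9, LinearEquiv.symm_apply_apply]
          rw [hγβ, h.grade_neg β hβΔ] at hlev
          omega
        have := GRS.sref_simple_pos h ⟨hαs.1, hαs.2⟩ hneg hne
        rw [map_neg] at this
        rw [hw'app]
        exact this
    have hsub := hmax w' hw'0 hI
    have hAA := GRS.inner_self_pos h hαΔ
    have hβN : β ∈ invSet Pos w' := by
      refine ⟨hβP, ?_⟩
      rw [hw'app, hwβ]
      have hrefl : sref α α = -α := by
        rw [sref_apply]
        rw [show 2*⟪α,α⟫/⟪α,α⟫ = (2:ℝ) from by field_simp]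
        module
      rw [hrefl, neg_neg]
      exact hαP
    have hβNw := hsub hβN
    have : -α ∈ Pos := by
      have := hβNw.2
      rwa [hwβ] at this
    exact GRS.pos_not_neg h hαP this
  · rintro ⟨hw0, hH⟩
    refine ⟨hw0, ?_⟩
    intro w' hw'0 hI
    intro γ hγN'
    obtain ⟨hγP, hγneg'⟩ := hγN'
    have hγΔ := h.pos_subset hγP
    have hdγ : 1 ≤ d γ := by
      have h0 : 0 ≤ d γ := GRS.d_nonneg_of_pos h hγP
      rcases eq_or_lt_of_le h0 with he | hlt
      · exfalso
        have hγ0 : γ ∈ pos0 d Pos := ⟨hγP, he.symm⟩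
        have := hw'0.2 γ hγ0
        exact GRS.pos_not_neg h this hγneg'
      · omega
    refine ⟨hγP, ?_⟩
    by_contra hc
    have hwγΔ : w γ ∈ Δ := (GRS.weyl_maps h hw0.1).1 γ hγΔ
    have hwγP : w γ ∈ Pos := GRS.pos_of_not h hwγΔ hc
    have hw'Δ : ∀ x ∈ Δ, w' x ∈ Δ := (GRS.weyl_maps h hw'0.1).1
    have hM1 : ∀ ν ∈ Δ, d ν = 1 → w ν ∈ Pos → ν ∈ Pos \ invSet Pos w' := by
      intro ν hνΔ hν1 hwνP
      have hνP : ν ∈ Pos := h.compatible ν hνΔ (by omega)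
      refine ⟨hνP, ?_⟩
      intro hνN'
      have hmem : ν ∈ invSet Pos w' ∩ level Δ d 1 := ⟨hνN', hνΔ, hν1⟩
      rw [hI] at hmem
      exact GRS.pos_not_neg h hwνP hmem.1.2
    have hMc : IsClosedSubset Δ (Pos \ invSet Pos w') := by
      intro x hx y hy hxy
      refine ⟨h.pos_add x hx.1 y hy.1 hxy, ?_⟩
      intro hN
      have hx' : w' x ∈ Pos :=
        GRS.pos_of_not h (hw'Δ x (h.pos_subset hx.1)) (fun hcc => hx.2 ⟨hx.1, hcc⟩)
      have hy' : w' y ∈ Pos :=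
        GRS.pos_of_not h (hw'Δ y (h.pos_subset hy.1)) (fun hcc => hy.2 ⟨hy.1, hcc⟩)
      have hsum : w' (x+y) ∈ Pos := by
        rw [map_add]
        refine h.pos_add _ hx' _ hy' ?_
        rw [← map_add]
        exact hw'Δ _ hxy
      exact GRS.pos_not_neg h hsum hN.2
    have hγM : γ ∈ Pos \ invSet Pos w' :=
      GRS.mem_of_closed h hw0 hH hM1 hMc (d γ).toNat γ hγΔ rfl hdγ hwγP
    exact hγM.2 ⟨hγP, hγneg'⟩
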